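/- Let Q₃ = [[q₁, q₂],[q₂, q₃]] where q₁ = (c₁/c₂)·λ_m, q₂ = −(c₁/c₂)·(κ + β + γ·λ_M), q₃ = κ_min − (c₁/c₂)·k·λ_M², with λ_m, λ_M, β, γ, k, c₂ > 0 fixed and κ, κ_min determined by a gain matrix that can be scaled: κ_min → ∞ while κ²/κ_min stays bounded when gains grow linearly. Then there exists c₁ > 0 and a choice of gains making Q₃ positive definite. -/

import Mathlib

open Matrix Filter

lemma posDef_fin_two {p q r : ℝ} (hp : 0 < p) (hd : 0 < p * r - q ^ 2) :
    (!![p, q; q, r] : Matrix (Fin 2) (Fin 2) ℝ).PosDef := by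
  rw [Matrix.posDef_iff_dotProduct_mulVec]
  constructor
  · rw [Matrix.IsHermitian]
    ext i j
    fin_cases i <;> fin_cases j <;> rfl
  · intro x hx
    have h : x 0 ≠ 0 ∨ x 1 ≠ 0 := by
      by_contra h
      push_neg at h
      apply hx
      ext i; fin_cases i <;> simp [h.1, h.2]
    have key : 0 < p * (x 0) ^ 2 + 2 * q * (x 0) * (x 1) + r * (x 1) ^ 2 := by
      by_cases h1 : x 1 = 0
      · have h0 : x 0 ≠ 0 := by tauto
        have : 0 < (x 0) ^ 2 := by positivity
        simp [h1]
        nlinarith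
      · nlinarith [sq_nonneg (p * x 0 + q * x 1), mul_pos hd (mul_self_pos.mpr h1), sq_abs (x 1)]
    have e00 : (!![p, q; q, r] : Matrix (Fin 2) (Fin 2) ℝ) 0 0 = p := rfl
    have e01 : (!![p, q; q, r] : Matrix (Fin 2) (Fin 2) ℝ) 0 1 = q := rfl
    have e10 : (!![p, q; q, r] : Matrix (Fin 2) (Fin 2) ℝ) 1 0 = q := rfl
    have e11 : (!![p, q; q, r] : Matrix (Fin 2) (Fin 2) ℝ) 1 1 = r := rfl
    simp only [Matrix.mulVec, dotProduct, Fin.sum_univ_two, e00, e01, e10, e11,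
      Pi.star_apply, star_trivial, RCLike.re_to_real]
    nlinarith [key]

/-- Gain-tuning step: with `q₁ = (c₁/c₂)λ_m`, `q₂ = −(c₁/c₂)(κ + β + γλ_M)`,
`q₃ = κ_min − (c₁/c₂)k·λ_M²`, where `κ, κ_min` come from a scalable gain matrix
(`κ_min → ∞` with `κ²/κ_min` bounded), there exist `c₁ > 0` and a choice of
gains making `Q₃` positive definite. -/
theorem stmt14 (lm lM β γ k c₂ : ℝ)
    (hlm : 0 < lm) (hlM : 0 < lM) (hβ : 0 < β) (hγ : 0 < γ) (hk : 0 < k)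
    (hc₂ : 0 < c₂)
    (κ κmin : ℝ → ℝ) (hκminpos : ∀ s, 0 < κmin s)
    (htend : Tendsto κmin atTop atTop)
    (hbdd : ∃ Cb : ℝ, ∀ s, (κ s) ^ 2 ≤ Cb * κmin s) :
    ∃ c₁ : ℝ, 0 < c₁ ∧ ∃ s : ℝ,
      (!![(c₁ / c₂) * lm, -((c₁ / c₂) * (κ s + β + γ * lM));
          -((c₁ / c₂) * (κ s + β + γ * lM)), κmin s - (c₁ / c₂) * k * lM ^ 2] :
        Matrix (Fin 2) (Fin 2) ℝ).PosDef := by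
  obtain ⟨Cb, hCb⟩ := hbdd
  set Cb' : ℝ := max Cb 1 with hCb'
  have hCb'pos : 0 < Cb' := lt_of_lt_of_le one_pos (le_max_right _ _)
  have hCb'le : ∀ s, (κ s) ^ 2 ≤ Cb' * κmin s := fun s =>
    (hCb s).trans (mul_le_mul_of_nonneg_right (le_max_left _ _) (hκminpos s).le)
  set a : ℝ := lm / (4 * Cb') with ha
  have hapos : 0 < a := div_pos hlm (by positivity)
  set b : ℝ := β + γ * lM with hb
  have hbpos : 0 < b := by positivity
  set K : ℝ := (a * lm * k * lM ^ 2 + 2 * a * b ^ 2) / (lm / 2) + 1 with hK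
  clear_value Cb' a b K
  obtain ⟨s, hs⟩ := (htend.eventually_ge_atTop K).exists
  refine ⟨c₂ * a, by positivity, s, ?_⟩
  have hcc : (c₂ * a) / c₂ = a := by field_simp
  rw [hcc, show κ s + β + γ * lM = κ s + b from by rw [hb]; ring]
  have h2aCb' : 2 * a * Cb' = lm / 2 := by
    rw [ha]; field_simp; ring
  have hsq : (κ s + b) ^ 2 ≤ 2 * Cb' * κmin s + 2 * b ^ 2 := by
    nlinarith [hCb'le s, sq_nonneg (κ s - b)]
  have h1 : a * (κ s + b) ^ 2 ≤ (lm / 2) * κmin s + 2 * a * b ^ 2 := by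
    calc a * (κ s + b) ^ 2 ≤ a * (2 * Cb' * κmin s + 2 * b ^ 2) :=
          mul_le_mul_of_nonneg_left hsq hapos.le
      _ = (2 * a * Cb') * κmin s + 2 * a * b ^ 2 := by ring
      _ = (lm / 2) * κmin s + 2 * a * b ^ 2 := by rw [h2aCb']
  have h2 : (lm / 2) * K = a * lm * k * lM ^ 2 + 2 * a * b ^ 2 + lm / 2 := by
    rw [hK]; field_simp
  have h3 : (lm / 2) * K ≤ (lm / 2) * κmin s :=
    mul_le_mul_of_nonneg_left hs (by linarith)
  have hdet : 0 < a * lm * (κmin s - a * k * lM ^ 2) - (-(a * (κ s + b))) ^ 2 := by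
    have heq : a * lm * (κmin s - a * k * lM ^ 2) - (-(a * (κ s + b))) ^ 2
        = a * (lm * κmin s - a * lm * k * lM ^ 2 - a * (κ s + b) ^ 2) := by ring
    rw [heq]
    apply mul_pos hapos
    nlinarith [h1, h2, h3, hlm]
  exact posDef_fin_two (mul_pos hapos hlm) hdet
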